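/- There is a universal constant C such that for all real numbers a > 0, 0 < δ < a and 0 < r ≤ a, the matrix-valued integral ∫_{{q ∈ ℝ³ : δ < |q| < a, q₃ > −r}} ( |q|² I − 3 q⊗q ) / |q|⁵ dq has norm at most C(1 + log(a/r)); in particular the bound is independent of δ. (The proof rests on the identity ∫_{S²} (I − 3Θ⊗Θ) dΘ = 0, where the integral is with respect to the surface measure on the unit sphere S².) -/

import Mathlib

/-!
Setting: Ω ⊂ ℝ³ is a bounded open domain with smooth boundary, encoded via a smooth
defining function ρ (Ω = {ρ < 0}, ∇ρ ≠ 0 on ∂Ω); the outward unit normal is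
ν = ∇ρ/‖∇ρ‖ and the surface measure on ∂Ω is the 2-dimensional Hausdorff measure.
Sobolev spaces W^{k,p} are encoded through pointwise derivatives and integrability of
the iterated derivatives; curl and divergence are the classical pointwise operators.
-/

noncomputable section

open MeasureTheory Metric Set Filter Topology Real
open scoped RealInnerProductSpace

abbrev E3 : Type := EuclideanSpace ℝ (Fin 3)

/-- the `i`-th standard basis vector of `ℝ³`. -/
def e3 (i : Fin 3) : E3 := EuclideanSpace.single i 1

/-- the vector of `ℝ³` with the given three components. -/
def vec3 (a b c : ℝ) : E3 := (WithLp.equiv 2 (Fin 3 → ℝ)).symm ![a, b, c]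

/-- cross product in `ℝ³`. -/
def cross3 (u v : E3) : E3 :=
  vec3 (u 1 * v 2 - u 2 * v 1) (u 2 * v 0 - u 0 * v 2) (u 0 * v 1 - u 1 * v 0)

/-- divergence `∇·u` of a vector field on `ℝ³`. -/
def vdiv (u : E3 → E3) (x : E3) : ℝ := ∑ i, fderiv ℝ u x (e3 i) i

/-- curl `∇×u` of a vector field on `ℝ³`. -/
def vcurl (u : E3 → E3) (x : E3) : E3 :=
  vec3 (fderiv ℝ u x (e3 1) 2 - fderiv ℝ u x (e3 2) 1)
       (fderiv ℝ u x (e3 2) 0 - fderiv ℝ u x (e3 0) 2)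
       (fderiv ℝ u x (e3 0) 1 - fderiv ℝ u x (e3 1) 0)

/-- outward unit normal of `Ω = {ρ < 0}`, namely `∇ρ/‖∇ρ‖`. -/
def outNormal (ρ : E3 → ℝ) (x : E3) : E3 := ‖gradient ρ x‖⁻¹ • gradient ρ x

/-- the Biot–Savart integral `∫_Ω F(y) × (x−y) / (4π|x−y|³) dy`. -/
def biotSavart (Ω : Set E3) (F : E3 → E3) (x : E3) : E3 :=
  ∫ y in Ω, (4 * π * ‖x - y‖ ^ 3)⁻¹ • cross3 (F y) (x - y)

/-- membership in the Sobolev space `W^{k,p}(Ω)`. -/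
def MemSobolev (k : ℕ) (p : ℝ) (Ω : Set E3) {F : Type*} [NormedAddCommGroup F]
    [NormedSpace ℝ F] (u : E3 → F) : Prop :=
  ContDiffOn ℝ k u Ω ∧
    ∀ i ∈ Finset.range (k + 1),
      IntegrableOn (fun x => ‖iteratedFDerivWithin ℝ i u Ω x‖ ^ p) Ω

/-- the Sobolev norm `‖u‖_{W^{k,p}(Ω)}`. -/
def sobolevNorm (k : ℕ) (p : ℝ) (Ω : Set E3) {F : Type*} [NormedAddCommGroup F]
    [NormedSpace ℝ F] (u : E3 → F) : ℝ :=
  ∑ i ∈ Finset.range (k + 1), (∫ x in Ω, ‖iteratedFDerivWithin ℝ i u Ω x‖ ^ p) ^ (1 / p)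

/-- the trace Sobolev norm `‖g‖_{W^{k－1/p,p}(∂Ω)}`, defined as the infimum of the
`W^{k,p}(Ω)` norms of all extensions of `g` to `Ω`. -/
def traceSobolevNorm (k : ℕ) (p : ℝ) (Ω : Set E3) {F : Type*} [NormedAddCommGroup F]
    [NormedSpace ℝ F] (g : E3 → F) : ℝ :=
  sInf {c | ∃ G : E3 → F, MemSobolev k p Ω G ∧ ContinuousOn G (closure Ω) ∧
    (∀ x ∈ frontier Ω, G x = g x) ∧ c = sobolevNorm k p Ω G}

/-- the logarithmic weight `ℓ(y) = log(2 + 1/dist(y,∂Ω))`. -/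
def ell (Ω : Set E3) (y : E3) : ℝ := Real.log (2 + 1 / Metric.infDist y (frontier Ω))

/-- (Frobenius) norm of a `3×3` matrix. -/
def matNorm (M : Matrix (Fin 3) (Fin 3) ℝ) : ℝ := Real.sqrt (∑ i, ∑ j, (M i j) ^ 2)

/-- the `j`-th column of a `3×3` matrix, as a vector of `ℝ³`. -/
def matCol (M : Matrix (Fin 3) (Fin 3) ℝ) (j : Fin 3) : E3 := vec3 (M 0 j) (M 1 j) (M 2 j)

/-- the matrix kernel `(|z−y|² I − 3 (z−y)⊗(z−y)) / |z−y|⁵`. -/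
def kmat (z y : E3) : Matrix (Fin 3) (Fin 3) ℝ :=
  Matrix.of fun i j =>
    (‖z - y‖ ^ 2 * (if i = j then (1 : ℝ) else 0) - 3 * ((z - y) i) * ((z - y) j)) / ‖z - y‖ ^ 5

/-- Levi-Civita symbol `ε_{ijk}` on `Fin 3`. -/
def lev (i j k : Fin 3) : ℝ :=
  (((j : ℕ) : ℝ) - ((i : ℕ) : ℝ)) * (((k : ℕ) : ℝ) - ((i : ℕ) : ℝ)) *
    (((k : ℕ) : ℝ) - ((j : ℕ) : ℝ)) / 2

/-- directional derivative of a vector field `w` along a vector field `Z`,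
i.e. `Z` acting on `w` as the first-order differential operator `Z_i ∂_{x_i}`. -/
def dirDeriv (Z : E3 → E3) (w : E3 → E3) : E3 → E3 := fun x => fderiv ℝ w x (Z x)

/-- a harmonic vector field on `Ω` tangent to the boundary:
`∇×h = 0`, `∇·h = 0` in `Ω` and `h·ν = 0` on `∂Ω`. -/
def IsHarmonicTangent (Ω : Set E3) (ρ : E3 → ℝ) (h : E3 → E3) : Prop :=
  DifferentiableOn ℝ h Ω ∧ (∀ x ∈ Ω, vcurl h x = 0) ∧ (∀ x ∈ Ω, vdiv h x = 0) ∧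
    ∀ x ∈ frontier Ω, ⟪h x, outNormal ρ x⟫ = 0

/-- the boundary field `A^j(x) = ∫_{∂Ω} ν_j(y) (x−y)/(4π|x−y|³) dσ(y)`. -/
def Avec (Ω : Set E3) (ρ : E3 → ℝ) (j : Fin 3) (x : E3) : E3 :=
  ∫ y in frontier Ω, ((4 * π * ‖x - y‖ ^ 3)⁻¹ * outNormal ρ y j) • (x - y) ∂μH[2]


def kent (i j : Fin 3) (q : E3) : ℝ :=
  (‖q‖ ^ 2 * (if i = j then (1 : ℝ) else 0) - 3 * q i * q j) / ‖q‖ ^ 5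

lemma coord_abs_le (q : E3) (i : Fin 3) : |q i| ≤ ‖q‖ := by
  have h : ‖q‖ = Real.sqrt (∑ k, q k ^ 2) := by
    rw [EuclideanSpace.norm_eq]; simp [Real.norm_eq_abs, sq_abs]
  rw [h, ← Real.sqrt_sq_eq_abs]
  exact Real.sqrt_le_sqrt (Finset.single_le_sum (fun k _ => sq_nonneg (q k)) (Finset.mem_univ i))

lemma kent_measurable (i j : Fin 3) : Measurable (kent i j) := by
  unfold kent
  fun_prop

lemma kent_abs_le (i j : Fin 3) (q : E3) (hq : q ≠ 0) : |kent i j q| ≤ 4 / ‖q‖ ^ 3 := by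
  have hn : 0 < ‖q‖ := norm_pos_iff.2 hq
  have h1 : |q i| ≤ ‖q‖ := coord_abs_le q i
  have h2 : |q j| ≤ ‖q‖ := coord_abs_le q j
  have hnum : |‖q‖ ^ 2 * (if i = j then (1 : ℝ) else 0) - 3 * q i * q j| ≤ 4 * ‖q‖ ^ 2 := by
    have : |3 * q i * q j| ≤ 3 * ‖q‖ ^ 2 := by
      rw [abs_mul, abs_mul]
      have h3 : |(3:ℝ)| = 3 := by norm_num
      rw [h3]
      nlinarith [abs_nonneg (q i), abs_nonneg (q j)]
    have h0 : |‖q‖ ^ 2 * (if i = j then (1 : ℝ) else 0)| ≤ ‖q‖ ^ 2 := by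
      split <;> simp [abs_of_nonneg, sq_nonneg, sq_abs, abs_sq]
    calc _ ≤ |‖q‖ ^ 2 * (if i = j then (1:ℝ) else 0)| + |3 * q i * q j| := abs_sub _ _
    _ ≤ 4 * ‖q‖ ^ 2 := by linarith
  rw [kent, abs_div]
  rw [abs_of_nonneg (by positivity : (0:ℝ) ≤ ‖q‖ ^ 5)]
  rw [div_le_div_iff₀ (by positivity) (by positivity)]
  calc |‖q‖ ^ 2 * (if i = j then (1 : ℝ) else 0) - 3 * q i * q j| * ‖q‖ ^ 3
      ≤ (4 * ‖q‖ ^ 2) * ‖q‖ ^ 3 := by nlinarith [hnum, pow_pos hn 3]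
    _ = 4 * ‖q‖ ^ 5 := by ring


lemma kent_integrableOn {s : Set E3} {δ a : ℝ} (hδ : 0 < δ) (hs : MeasurableSet s)
    (hsub : ∀ q ∈ s, δ ≤ ‖q‖ ∧ ‖q‖ ≤ a) (i j : Fin 3) :
    IntegrableOn (kent i j) s := by
  have hs' : s ⊆ closedBall 0 a := fun q hq => by
    simpa [closedBall, dist_zero_right] using (hsub q hq).2
  have hfin : volume s ≠ ⊤ :=
    ((measure_mono hs').trans_lt measure_closedBall_lt_top).ne
  refine Measure.integrableOn_of_bounded (M := 4 / δ ^ 3) hfin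
    ((kent_measurable i j).aestronglyMeasurable) ?_
  filter_upwards [ae_restrict_mem hs] with q hq
  have h1 : δ ≤ ‖q‖ := (hsub q hq).1
  have hq0 : q ≠ 0 := by
    intro h; rw [h] at h1; simp at h1; linarith
  calc ‖kent i j q‖ = |kent i j q| := Real.norm_eq_abs _
    _ ≤ 4 / ‖q‖ ^ 3 := kent_abs_le i j q hq0
    _ ≤ 4 / δ ^ 3 := by
        apply div_le_div_of_nonneg_left (by norm_num) (by positivity)
        exact pow_le_pow_left₀ hδ.le h1 3

def negCoord (i : Fin 3) : E3 ≃ₗᵢ[ℝ] E3 :=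
  LinearIsometryEquiv.piLpCongrRight 2
    (fun k : Fin 3 => if k = i then LinearIsometryEquiv.neg ℝ else LinearIsometryEquiv.refl ℝ ℝ)

lemma negCoord_apply (i : Fin 3) (q : E3) (k : Fin 3) :
    negCoord i q k = if k = i then -(q k) else q k := by
  rw [negCoord, LinearIsometryEquiv.piLpCongrRight_apply]
  by_cases hk : k = i
  · subst hk; simp
  · simp [hk]

def swapCoord (i : Fin 3) : E3 ≃ₗᵢ[ℝ] E3 :=
  LinearIsometryEquiv.piLpCongrLeft 2 ℝ ℝ (Equiv.swap i 0)

lemma swapCoord_apply (i : Fin 3) (q : E3) (k : Fin 3) :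
    swapCoord i q k = q (Equiv.swap i 0 k) := by
  rw [swapCoord, LinearIsometryEquiv.piLpCongrLeft_apply]
  simp [Equiv.piCongrLeft'_apply, Equiv.symm_swap]

lemma preimage_annulus (T : E3 ≃ₗᵢ[ℝ] E3) (δ a : ℝ) :
    T ⁻¹' {q : E3 | δ < ‖q‖ ∧ ‖q‖ < a} = {q : E3 | δ < ‖q‖ ∧ ‖q‖ < a} := by
  ext q; simp [T.norm_map]

lemma integral_comp_isometry (T : E3 ≃ₗᵢ[ℝ] E3) (f : E3 → ℝ) (δ a : ℝ) :
    ∫ q in {q : E3 | δ < ‖q‖ ∧ ‖q‖ < a}, f (T q) =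
    ∫ q in {q : E3 | δ < ‖q‖ ∧ ‖q‖ < a}, f q := by
  have := T.measurePreserving.setIntegral_preimage_emb
    T.toHomeomorph.measurableEmbedding f {q : E3 | δ < ‖q‖ ∧ ‖q‖ < a}
  rwa [preimage_annulus] at this

lemma annulus_measurable (δ a : ℝ) : MeasurableSet {q : E3 | δ < ‖q‖ ∧ ‖q‖ < a} := by
  have : {q : E3 | δ < ‖q‖ ∧ ‖q‖ < a} =
      {q : E3 | δ < ‖q‖} ∩ {q : E3 | ‖q‖ < a} := by ext q; simp [mem_setOf_eq]
  rw [this]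
  exact ((isOpen_lt continuous_const continuous_norm).inter
    (isOpen_lt continuous_norm continuous_const)).measurableSet

lemma norm_sq_eq (q : E3) : ‖q‖ ^ 2 = q 0 ^ 2 + q 1 ^ 2 + q 2 ^ 2 := by
  have h : ‖q‖ = Real.sqrt (∑ k, q k ^ 2) := by
    rw [EuclideanSpace.norm_eq]; simp [Real.norm_eq_abs, sq_abs]
  rw [h, Real.sq_sqrt (Finset.sum_nonneg fun k _ => sq_nonneg (q k)), Fin.sum_univ_three]

lemma annulus_integral_zero {δ a : ℝ} (hδ : 0 < δ) (hδa : δ < a) (i j : Fin 3) :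
    ∫ q in {q : E3 | δ < ‖q‖ ∧ ‖q‖ < a}, kent i j q = 0 := by
  set A := {q : E3 | δ < ‖q‖ ∧ ‖q‖ < a} with hA
  by_cases hij : i = j
  · -- diagonal case
    subst hij
    have hswap : ∀ i : Fin 3, ∫ q in A, kent i i q = ∫ q in A, kent 0 0 q := by
      intro i
      have h := integral_comp_isometry (swapCoord i) (kent i i) δ a
      rw [← h]
      apply setIntegral_congr_fun (annulus_measurable δ a)
      intro q _
      have hnorm : ‖swapCoord i q‖ = ‖q‖ := (swapCoord i).norm_map q
      simp only [kent, hnorm, swapCoord_apply]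
      norm_num
    have hint : ∀ k : Fin 3, IntegrableOn (kent k k) A :=
      fun k => kent_integrableOn hδ (annulus_measurable δ a)
        (fun q hq => ⟨hq.1.le, hq.2.le⟩) k k
    have hsum : ∀ q : E3, kent 0 0 q + kent 1 1 q + kent 2 2 q = 0 := by
      intro q
      have hq2 := norm_sq_eq q
      rcases eq_or_ne ‖q‖ 0 with h0 | h0
      · simp [kent, h0]
      · have h5 : (‖q‖ : ℝ) ^ 5 ≠ 0 := pow_ne_zero _ h0
        simp only [kent]
        norm_num
        rw [← add_div, ← add_div, div_eq_zero_iff]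
        left
        linarith
    have hZ : ∫ q in A, (kent 0 0 q + kent 1 1 q + kent 2 2 q) = 0 := by
      rw [setIntegral_congr_fun (annulus_measurable δ a) (fun q _ => hsum q)]
      simp
    have h01 : IntegrableOn (fun q => kent 0 0 q + kent 1 1 q) A := (hint 0).add (hint 1)
    rw [integral_add h01 (hint 2), integral_add (hint 0) (hint 1),
      hswap 1, hswap 2] at hZ
    rw [hswap i]
    linarith
  · -- off-diagonal case
    have h := integral_comp_isometry (negCoord i) (kent i j) δ a
    have hneg : ∀ q ∈ A, kent i j (negCoord i q) = -(kent i j q) := by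
      intro q _
      have hnorm : ‖negCoord i q‖ = ‖q‖ := (negCoord i).norm_map q
      have hji : ¬ j = i := fun h' => hij h'.symm
      simp only [kent, hnorm, negCoord_apply, if_neg hji, if_neg hij, mul_zero, zero_sub]
      norm_num
      ring_nf
    rw [setIntegral_congr_fun (annulus_measurable δ a) hneg, integral_neg] at h
    linarith

lemma shell_bound {r a : ℝ} (hr : 0 < r) (hra : r ≤ a) {s : Set E3} (hs : MeasurableSet s)
    (hsub : ∀ q ∈ s, r ≤ ‖q‖ ∧ ‖q‖ < a) (i j : Fin 3) :
    |∫ q in s, kent i j q| ≤ (12 * (volume (ball (0:E3) 1)).toReal) * Real.log (a / r) := by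
  set f : ℝ → ℝ := (Ico r a).indicator (fun y => 4 * (y ^ 3)⁻¹) with hf
  set F : E3 → ℝ := fun x => f ‖x‖ with hF
  have hFeq : F = (norm ⁻¹' Ico r a).indicator (fun x : E3 => 4 * (‖x‖ ^ 3)⁻¹) := by
    funext x
    rw [hF, hf]
    exact (Set.indicator_comp_right (norm : E3 → ℝ)
      (g := fun y => 4 * (y ^ 3)⁻¹) (x := x)).symm
  have hmes : MeasurableSet (norm ⁻¹' Ico r a : Set E3) :=
    measurable_norm measurableSet_Ico
  have hFint : Integrable F := by
    rw [hFeq, integrable_indicator_iff hmes]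
    have hsub' : (norm ⁻¹' Ico r a : Set E3) ⊆ closedBall 0 a := fun q hq => by
      simpa [closedBall, dist_zero_right] using hq.2.le
    refine Measure.integrableOn_of_bounded (M := 4 * (r ^ 3)⁻¹)
      (((measure_mono hsub').trans_lt measure_closedBall_lt_top).ne)
      ((measurable_const.mul ((measurable_norm.pow_const 3).inv)).aestronglyMeasurable) ?_
    filter_upwards [ae_restrict_mem hmes] with q hq
    rw [Real.norm_eq_abs, abs_of_nonneg (by positivity)]
    have h1 : r ≤ ‖q‖ := hq.1
    gcongr
  have hFnonneg : ∀ x, 0 ≤ F x := fun x => by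
    rw [hFeq]
    exact Set.indicator_nonneg (fun y _ => by positivity) x
  have hpt : ∀ q ∈ s, |kent i j q| ≤ F q := by
    intro q hq
    obtain ⟨h1, h2⟩ := hsub q hq
    have hq0 : q ≠ 0 := fun h => by rw [h] at h1; simp at h1; linarith
    have : F q = 4 * (‖q‖ ^ 3)⁻¹ := by
      rw [hFeq, Set.indicator_of_mem (by exact ⟨h1, h2⟩)]
    rw [this]
    simpa [div_eq_mul_inv] using kent_abs_le i j q hq0
  have step1 : |∫ q in s, kent i j q| ≤ ∫ q in s, F q := by
    have habs := norm_integral_le_integral_norm (μ := volume.restrict s) (kent i j)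
    simp only [Real.norm_eq_abs] at habs
    refine habs.trans ?_
    exact setIntegral_mono_on ((kent_integrableOn hr hs
      (fun q hq => ⟨(hsub q hq).1, (hsub q hq).2.le⟩) i j).abs) hFint.integrableOn hs hpt
  have step2 : ∫ q in s, F q ≤ ∫ x, F x :=
    setIntegral_le_integral hFint (Filter.Eventually.of_forall hFnonneg)
  have hdim : Module.finrank ℝ E3 = 3 := finrank_euclideanSpace_fin
  have step3 : ∫ x, F x = (12 * (volume (ball (0:E3) 1)).toReal) * Real.log (a / r) := by
    rw [hF]
    rw [MeasureTheory.integral_fun_norm_addHaar (volume : Measure E3) f, hdim]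
    have hind : (fun y : ℝ => y ^ (3 - 1) • f y) = (Ico r a).indicator (fun y => 4 * y⁻¹) := by
      funext y
      by_cases hy : y ∈ Ico r a
      · rw [hf]
        rw [Set.indicator_of_mem hy, Set.indicator_of_mem hy, smul_eq_mul]
        have hy0 : y ≠ 0 := by have := hy.1; intro h; rw [h] at this; linarith
        field_simp
      · rw [hf, Set.indicator_of_notMem hy, Set.indicator_of_notMem hy, smul_zero]
    rw [hind]
    rw [MeasureTheory.integral_indicator measurableSet_Ico,
      Measure.restrict_restrict measurableSet_Ico,
      Set.inter_eq_self_of_subset_left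
        (fun y (hy : y ∈ Ico r a) => Set.mem_Ioi.mpr (hr.trans_le hy.1))]
    rw [MeasureTheory.integral_Ico_eq_integral_Ioo, ← MeasureTheory.integral_Ioc_eq_integral_Ioo,
      ← intervalIntegral.integral_of_le hra]
    rw [intervalIntegral.integral_const_mul, integral_inv_of_pos hr (hr.trans_le hra)]
    simp only [smul_eq_mul, nsmul_eq_mul]
    push_cast
    rw [measureReal_def]
    ring
  linarith [step1, step2, step3.le, step3.ge]

theorem truncated_annulus_matrix_integral_bound :
    ∃ C > 0, ∀ a δ r : ℝ, 0 < a → 0 < δ → δ < a → 0 < r → r ≤ a →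
      matNorm (Matrix.of fun i j =>
          ∫ q in {q : E3 | δ < ‖q‖ ∧ ‖q‖ < a ∧ -r < q 2},
            (‖q‖ ^ 2 * (if i = j then (1 : ℝ) else 0) - 3 * q i * q j) / ‖q‖ ^ 5)
        ≤ C * (1 + Real.log (a / r)) := by
  set V : ℝ := (volume (ball (0:E3) 1)).toReal with hV
  have hV0 : 0 ≤ V := ENNReal.toReal_nonneg
  refine ⟨36 * V + 1, by positivity, ?_⟩
  intro a δ r ha hδ hδa hr hra
  have hlog : 0 ≤ Real.log (a / r) := Real.log_nonneg ((one_le_div hr).mpr hra)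
  have hm2 : Measurable (fun q : E3 => q 2) := by fun_prop
  set A : Set E3 := {q | δ < ‖q‖ ∧ ‖q‖ < a} with hA
  set Eset : Set E3 := {q : E3 | δ < ‖q‖ ∧ ‖q‖ < a ∧ -r < q 2} with hE
  set B : Set E3 := A ∩ {q | q 2 ≤ -r} with hB
  have hmA : MeasurableSet A := annulus_measurable δ a
  have hmE : MeasurableSet Eset := by
    have : Eset = A ∩ {q : E3 | -r < q 2} := by
      ext q; simp only [hE, hA, mem_setOf_eq, mem_inter_iff]; tauto
    rw [this]
    exact hmA.inter (measurableSet_lt measurable_const hm2)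
  have hmB : MeasurableSet B := hmA.inter (measurableSet_le hm2 measurable_const)
  have hunion : Eset ∪ B = A := by
    ext q
    simp only [hE, hB, hA, mem_union, mem_inter_iff, mem_setOf_eq]
    constructor
    · rintro (⟨h1, h2, _⟩ | ⟨⟨h1, h2⟩, _⟩) <;> exact ⟨h1, h2⟩
    · rintro ⟨h1, h2⟩
      by_cases h3 : -r < q 2
      · exact Or.inl ⟨h1, h2, h3⟩
      · exact Or.inr ⟨⟨h1, h2⟩, le_of_not_gt h3⟩
  have hdisj : Disjoint Eset B := by
    rw [Set.disjoint_left]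
    rintro q ⟨_, _, h3⟩ ⟨_, h4⟩
    exact absurd h3 (not_lt.mpr h4)
  have hBsub : ∀ q ∈ B, r ≤ ‖q‖ ∧ ‖q‖ < a := by
    rintro q ⟨⟨_, h2⟩, h4⟩
    refine ⟨?_, h2⟩
    have : r ≤ |q 2| := le_abs.mpr (Or.inr (by have h4' : q 2 ≤ -r := h4; linarith))
    exact this.trans (coord_abs_le q 2)
  -- entrywise bound
  have key : ∀ i j : Fin 3, |∫ q in Eset, kent i j q| ≤ 12 * V * Real.log (a / r) := by
    intro i j
    have hintE : IntegrableOn (kent i j) Eset :=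
      kent_integrableOn hδ hmE (fun q hq => ⟨hq.1.le, hq.2.1.le⟩) i j
    have hintB : IntegrableOn (kent i j) B :=
      kent_integrableOn hδ hmB (fun q hq => ⟨hq.1.1.le, hq.1.2.le⟩) i j
    have hsplit : (∫ q in Eset, kent i j q) + ∫ q in B, kent i j q = 0 := by
      rw [← setIntegral_union hdisj hmB hintE hintB, hunion]
      exact annulus_integral_zero hδ hδa i j
    have hBbound := shell_bound hr hra hmB hBsub i j
    have : |∫ q in Eset, kent i j q| = |∫ q in B, kent i j q| := by
      rw [show (∫ q in Eset, kent i j q) = -(∫ q in B, kent i j q) by linarith, abs_neg]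
    rw [this]
    exact hBbound
  -- assemble matrix norm bound
  set K : ℝ := 12 * V * Real.log (a / r) with hK
  have hK0 : 0 ≤ K := by positivity
  have hmatrix : matNorm (Matrix.of fun i j =>
      ∫ q in Eset, kent i j q) ≤ 3 * K := by
    rw [matNorm]
    have hsum : (∑ i, ∑ j, ((Matrix.of fun i j => ∫ q in Eset, kent i j q) i j) ^ 2)
        ≤ ∑ _i : Fin 3, ∑ _j : Fin 3, K ^ 2 := by
      refine Finset.sum_le_sum fun i _ => Finset.sum_le_sum fun j _ => ?_
      have h := key i j
      calc ((Matrix.of fun i j => ∫ q in Eset, kent i j q) i j) ^ 2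
          = |∫ q in Eset, kent i j q| ^ 2 := by rw [sq_abs]; rfl
        _ ≤ K ^ 2 := pow_le_pow_left₀ (abs_nonneg _) h 2
    calc Real.sqrt (∑ i, ∑ j, ((Matrix.of fun i j => ∫ q in Eset, kent i j q) i j) ^ 2)
        ≤ Real.sqrt (∑ _i : Fin 3, ∑ _j : Fin 3, K ^ 2) := Real.sqrt_le_sqrt hsum
      _ = Real.sqrt ((3 * K) ^ 2) := by
          rw [Finset.sum_const, Finset.sum_const]
          simp only [Finset.card_univ, Fintype.card_fin, nsmul_eq_mul]
          congr 1
          push_cast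
          ring
      _ = 3 * K := Real.sqrt_sq (by positivity)
  have hfinal : (3:ℝ) * K ≤ (36 * V + 1) * (1 + Real.log (a / r)) := by
    rw [hK]
    nlinarith [hlog, hV0]
  exact le_trans (by exact hmatrix) hfinal
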